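/- The Baire partial quasi-metric space (Σ^∞, q_B) over an ordered alphabet (Σ, ⪯) is complete; that is, the quasi-metric space (Σ^∞, d_{q_B}) with d_{q_B}(x,y) = q_B(x,y) - q_B(x,x) is bicomplete. -/

import Mathlib

open scoped NNReal ENNReal

/-- A nonempty finite or infinite word over an alphabet `α`: letters are indexed
from `1`, the domain of defined letters is an initial segment. -/
structure PWord (α : Type*) where
  toFun : ℕ → Option α
  map_zero' : toFun 0 = none
  map_one' : (toFun 1).isSome = true
  mono' : ∀ n, 1 ≤ n → (toFun (n + 1)).isSome = true → (toFun n).isSome = true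

/-- The length `l(x) ∈ [1,∞]` of a word. -/
noncomputable def PWord.len {α : Type*} (x : PWord α) : ℕ∞ :=
  ⨆ n ∈ {n : ℕ | (x.toFun n).isSome = true}, (n : ℕ∞)

/-- `l_⪯(x,y) = sup{n ∈ ℕ : x_k ⪯ y_k for all k ≤ n}` (and `0` if `x₁ ⋠ y₁`). -/
noncomputable def lcpLe {α : Type*} [PartialOrder α] (x y : PWord α) : ℕ∞ :=
  ⨆ n ∈ {n : ℕ | ∀ k, 1 ≤ k → k ≤ n →
      ∃ s t, x.toFun k = some s ∧ y.toFun k = some t ∧ s ≤ t}, (n : ℕ∞)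

/-- `2^{-m}` for `m ∈ ℕ∞`, with `2^{-∞} = 0`. -/
noncomputable def epow (m : ℕ∞) : ℝ≥0 := WithTop.recTopCoe 0 (fun n => 2⁻¹ ^ n) m

/-- The Baire partial quasi-metric `q_B(x,y) = 2^{-l_⪯(x,y)}`. -/
noncomputable def qB {α : Type*} [PartialOrder α] (x y : PWord α) : ℝ≥0 :=
  epow (lcpLe x y)

/-- The quasi-metric induced by `q_B`: `d_{q_B}(x,y) = q_B(x,y) - q_B(x,x)`. -/
noncomputable def dqB {α : Type*} [PartialOrder α] (x y : PWord α) : ℝ≥0 :=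
  qB x y - qB x x

section Aux

variable {α : Type*} [PartialOrder α]

lemma half_lt_one : (2⁻¹:ℝ≥0) < 1 := by
  rw [← NNReal.coe_lt_coe]
  norm_num

lemma half_add_half : (2⁻¹:ℝ≥0) + 2⁻¹ = 1 := by
  rw [← NNReal.coe_inj]
  push_cast
  norm_num

lemma half_pow_le_iff {a b : ℕ} : (2⁻¹:ℝ≥0)^a ≤ 2⁻¹^b ↔ b ≤ a := by
  constructor
  · intro h
    by_contra hc
    push_neg at hc
    exact absurd h (not_le.mpr (pow_lt_pow_right_of_lt_one₀ (by norm_num) half_lt_one hc))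
  · intro h
    exact pow_le_pow_of_le_one (by norm_num) half_lt_one.le h

lemma two_halves (j : ℕ) : (2⁻¹:ℝ≥0)^(j+1) + 2⁻¹^(j+1) = 2⁻¹^j := by
  rw [pow_succ, ← mul_add, half_add_half, mul_one]

lemma half_pow_pos (j : ℕ) : (0:ℝ≥0) < 2⁻¹^j := pow_pos (by norm_num) j

lemma mem_of_cast_le_biSup {S : Set ℕ} (hS : ∀ m n, 1 ≤ m → m ≤ n → n ∈ S → m ∈ S)
    {n : ℕ} (hn : 1 ≤ n) (h : (n:ℕ∞) ≤ ⨆ m ∈ S, (m:ℕ∞)) : n ∈ S := by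
  by_contra hns
  have hub : (⨆ m ∈ S, (m:ℕ∞)) ≤ ((n-1:ℕ):ℕ∞) := by
    refine iSup₂_le fun m hm => ?_
    have hmn : m ≤ n - 1 := by
      by_contra hc
      exact hns (hS n m hn (by omega) hm)
    exact_mod_cast hmn
  have h2 : (n:ℕ∞) ≤ ((n-1:ℕ):ℕ∞) := h.trans hub
  have h3 : n ≤ n - 1 := by exact_mod_cast h2
  omega

lemma enat_eq_top_of_forall {s : ℕ∞} (h : ∀ k : ℕ, (k:ℕ∞) ≤ s) : s = ⊤ := by
  induction s using ENat.recTopCoe with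
  | top => rfl
  | coe n =>
    have := h (n+1)
    have : n + 1 ≤ n := by exact_mod_cast this
    omega

namespace PWord

lemma isSome_of_le (x : PWord α) : ∀ {m n : ℕ}, 1 ≤ m → m ≤ n →
    (x.toFun n).isSome = true → (x.toFun m).isSome = true := by
  intro m n hm hmn h
  induction n with
  | zero => omega
  | succ n ih =>
    rcases eq_or_lt_of_le hmn with rfl | hlt
    · exact h
    · exact ih (by omega) (x.mono' n (by omega) h)

lemma cast_le_len_iff (x : PWord α) {n : ℕ} (hn : 1 ≤ n) :
    (n:ℕ∞) ≤ x.len ↔ (x.toFun n).isSome = true := by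
  constructor
  · intro h
    exact mem_of_cast_le_biSup (fun a b ha hab hb => x.isSome_of_le ha hab hb) hn h
  · intro h
    exact le_biSup _ h

lemma one_le_len (x : PWord α) : (1:ℕ∞) ≤ x.len :=
  (x.cast_le_len_iff le_rfl).mpr x.map_one' |>.trans_eq' (by norm_num)

lemma toFun_eq_none (x : PWord α) {n : ℕ} (h : x.len < (n:ℕ∞)) : x.toFun n = none := by
  rcases Nat.eq_zero_or_pos n with rfl | hn
  · exact x.map_zero'
  · by_contra hc
    have hs : (x.toFun n).isSome = true := Option.ne_none_iff_isSome.mp hc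
    exact absurd ((x.cast_le_len_iff hn).mpr hs) (not_le.mpr h)

lemma ext' {x y : PWord α} (h : x.toFun = y.toFun) : x = y := by
  cases x; cases y; cases h; rfl

end PWord

lemma cast_le_lcpLe_iff (x y : PWord α) (n : ℕ) :
    (n:ℕ∞) ≤ lcpLe x y ↔ ∀ k, 1 ≤ k → k ≤ n →
      ∃ s t, x.toFun k = some s ∧ y.toFun k = some t ∧ s ≤ t := by
  constructor
  · intro h
    rcases Nat.eq_zero_or_pos n with rfl | hn
    · intro k hk1 hk0; omega
    · refine mem_of_cast_le_biSup ?_ hn h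
      intro a b ha hab hb
      simp only [Set.mem_setOf_eq] at hb ⊢
      intro k hk1 hka
      exact hb k hk1 (hka.trans hab)
  · intro h
    exact le_biSup _ h

lemma lcpLe_le_len_left (x y : PWord α) : lcpLe x y ≤ x.len := by
  refine iSup₂_le fun n hn => ?_
  rcases Nat.eq_zero_or_pos n with rfl | h1
  · simp
  · obtain ⟨s, t, hs, _, _⟩ := hn n h1 le_rfl
    exact (x.cast_le_len_iff h1).mpr (by simp [hs])

lemma lcpLe_le_len_right (x y : PWord α) : lcpLe x y ≤ y.len := by
  refine iSup₂_le fun n hn => ?_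
  rcases Nat.eq_zero_or_pos n with rfl | h1
  · simp
  · obtain ⟨s, t, _, ht, _⟩ := hn n h1 le_rfl
    exact (y.cast_le_len_iff h1).mpr (by simp [ht])

lemma lcpLe_self (x : PWord α) : lcpLe x x = x.len := by
  refine le_antisymm (lcpLe_le_len_left x x) (iSup₂_le fun n hn => ?_)
  refine le_biSup _ ?_
  intro k hk1 hkn
  have hk : (x.toFun k).isSome = true := x.isSome_of_le hk1 hkn hn
  obtain ⟨s, hs⟩ := Option.isSome_iff_exists.mp hk
  exact ⟨s, s, hs, hs, le_rfl⟩

@[simp] lemma epow_top : epow ⊤ = 0 := rfl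

@[simp] lemma epow_coe (n : ℕ) : epow (n:ℕ∞) = 2⁻¹^n := rfl

lemma epow_le_half_pow {m : ℕ∞} {k : ℕ} : epow m ≤ 2⁻¹^k ↔ (k:ℕ∞) ≤ m := by
  induction m using ENat.recTopCoe with
  | top => simp [(half_pow_pos k).le]
  | coe n =>
    rw [epow_coe, half_pow_le_iff, Nat.cast_le]

lemma half_pow_le_epow {m : ℕ∞} {k : ℕ} : 2⁻¹^k ≤ epow m ↔ m ≤ (k:ℕ∞) := by
  induction m using ENat.recTopCoe with
  | top => simp [not_le.mpr (half_pow_pos k), (half_pow_pos k).ne']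
  | coe n =>
    rw [epow_coe, half_pow_le_iff, Nat.cast_le]

lemma epow_le_epow {m n : ℕ∞} (h : m ≤ n) : epow n ≤ epow m := by
  induction m using ENat.recTopCoe with
  | top => rw [top_le_iff.mp h]
  | coe m =>
    rw [epow_coe]
    exact epow_le_half_pow.mpr h

lemma qB_self (x : PWord α) : qB x x = epow x.len := by rw [qB, lcpLe_self]

lemma dqB_eq (x y : PWord α) : dqB x y = epow (lcpLe x y) - epow x.len := by
  rw [dqB, qB, qB_self]

lemma dqB_le (x y : PWord α) : dqB x y ≤ epow (lcpLe x y) := by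
  rw [dqB_eq]; exact tsub_le_self

end Aux

/-- the Baire partial quasi-metric space `(Σ^∞, q_B)` is complete:
the symmetrized metric `d_{q_B}ˢ(x,y) = max(d_{q_B}(x,y), d_{q_B}(y,x))` is a
complete metric, i.e. `(Σ^∞, d_{q_B})` is bicomplete. -/
theorem baire_stmt16 {α : Type*} [Nonempty α] [PartialOrder α]
    (x : ℕ → PWord α)
    (hcauchy : ∀ ε : ℝ≥0, 0 < ε → ∃ N, ∀ m n, N ≤ m → N ≤ n →
      max (dqB (x m) (x n)) (dqB (x n) (x m)) < ε) :
    ∃ l : PWord α, ∀ ε : ℝ≥0, 0 < ε → ∃ N, ∀ n, N ≤ n →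
      max (dqB l (x n)) (dqB (x n) l) < ε := by
  by_cases hB : ∀ L : ℕ, ∃ N, ∀ n, N ≤ n → ((L:ℕ):ℕ∞) < (x n).len
  · -- Case B : lengths tend to infinity; build the infinite limit word.
    have hex : ∀ k : ℕ, ∃ N, (∀ m n, N ≤ m → N ≤ n →
        max (dqB (x m) (x n)) (dqB (x n) (x m)) < 2⁻¹^(k+2)) ∧
        (∀ n, N ≤ n → (((k+1:ℕ)):ℕ∞) < (x n).len) := by
      intro k
      obtain ⟨N1, h1⟩ := hcauchy (2⁻¹^(k+2)) (half_pow_pos _)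
      obtain ⟨N2, h2⟩ := hB (k+1)
      refine ⟨max N1 N2, fun m n hm hn =>
        h1 m n ((le_max_left _ _).trans hm) ((le_max_left _ _).trans hn),
        fun n hn => h2 n ((le_max_right _ _).trans hn)⟩
    choose N0 hN0cau hN0len using hex
    set Nm : ℕ → ℕ := fun k => Nat.rec (N0 0) (fun k ih => max ih (N0 (k+1))) k with hNm
    have hNmsucc : ∀ k, Nm k ≤ Nm (k+1) := fun k => le_max_left _ _
    have hNmmono : Monotone Nm := monotone_nat_of_le_succ hNmsucc
    have hNm0 : ∀ k, N0 k ≤ Nm k := by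
      intro k
      cases k with
      | zero => exact le_rfl
      | succ k => exact le_max_right _ _
    have hlcp : ∀ k m n, N0 k ≤ m → N0 k ≤ n → (k:ℕ∞) ≤ lcpLe (x m) (x n) := by
      intro k m n hm hn
      have hd : dqB (x m) (x n) < 2⁻¹^(k+2) :=
        (le_max_left _ _).trans_lt (hN0cau k m n hm hn)
      rw [dqB_eq] at hd
      have hlm : (((k+2:ℕ)):ℕ∞) ≤ (x m).len := by
        have := Order.add_one_le_of_lt (hN0len k m hm)
        push_cast at this ⊢
        exact this
      have h2 : epow (x m).len ≤ 2⁻¹^(k+2) := epow_le_half_pow.mpr hlm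
      have hle : epow (x m).len ≤ epow (lcpLe (x m) (x n)) :=
        epow_le_epow (lcpLe_le_len_left _ _)
      have h3 : epow (lcpLe (x m) (x n)) < 2⁻¹^(k+1) := by
        calc epow (lcpLe (x m) (x n))
            = (epow (lcpLe (x m) (x n)) - epow (x m).len) + epow (x m).len :=
              (tsub_add_cancel_of_le hle).symm
          _ < 2⁻¹^(k+2) + 2⁻¹^(k+2) := add_lt_add_of_lt_of_le hd h2
          _ = 2⁻¹^(k+1) := two_halves (k+1)
      have h4 : ¬ (lcpLe (x m) (x n) ≤ ((k+1:ℕ):ℕ∞)) := by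
        intro hle'
        exact absurd h3 (not_lt.mpr (half_pow_le_epow.mpr hle'))
      have h5 := (not_le.mp h4).le
      calc (k:ℕ∞) ≤ ((k+1:ℕ):ℕ∞) := by exact_mod_cast Nat.le_succ k
        _ ≤ lcpLe (x m) (x n) := h5
    have hagree : ∀ k m n, N0 k ≤ m → N0 k ≤ n → ∀ j, 1 ≤ j → j ≤ k →
        (x m).toFun j = (x n).toFun j := by
      intro k m n hm hn j hj1 hjk
      obtain ⟨s, t, hs, ht, hst⟩ :=
        (cast_le_lcpLe_iff (x m) (x n) k).mp (hlcp k m n hm hn) j hj1 hjk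
      obtain ⟨t', s', ht', hs', hts⟩ :=
        (cast_le_lcpLe_iff (x n) (x m) k).mp (hlcp k n m hn hm) j hj1 hjk
      rw [hs] at hs'
      rw [ht] at ht'
      have : s = t := le_antisymm hst (by
        rw [Option.some_inj] at hs' ht'
        rw [← hs', ← ht'] at hts
        exact hts)
      rw [hs, ht, this]
    have hfsome : ∀ j, 1 ≤ j → ((x (Nm j)).toFun j).isSome = true := by
      intro j hj
      have hlj : ((j:ℕ):ℕ∞) < (x (Nm j)).len := by
        refine lt_of_le_of_lt ?_ (hN0len j (Nm j) (hNm0 j))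
        exact_mod_cast Nat.le_succ j
      exact ((x (Nm j)).cast_le_len_iff hj).mp hlj.le
    set f : ℕ → Option α := fun j => if j = 0 then none else (x (Nm j)).toFun j with hf
    have hfval : ∀ j, 1 ≤ j → f j = (x (Nm j)).toFun j := by
      intro j hj
      simp only [hf, if_neg (by omega : ¬ j = 0)]
    have hfsome' : ∀ j, 1 ≤ j → (f j).isSome = true := by
      intro j hj
      rw [hfval j hj]
      exact hfsome j hj
    refine ⟨⟨f, by simp [hf], hfsome' 1 le_rfl, fun n hn _ => hfsome' n hn⟩, ?_⟩
    set l : PWord α := ⟨f, by simp [hf], hfsome' 1 le_rfl, fun n hn _ => hfsome' n hn⟩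
    have hlimlcp : ∀ k n, Nm k ≤ n → (k:ℕ∞) ≤ lcpLe l (x n) ∧ (k:ℕ∞) ≤ lcpLe (x n) l := by
      intro k n hn
      have key : ∀ j, 1 ≤ j → j ≤ k → l.toFun j = (x n).toFun j := by
        intro j hj1 hjk
        have h1 : l.toFun j = (x (Nm j)).toFun j := hfval j hj1
        have h2 : (x (Nm j)).toFun j = (x n).toFun j :=
          hagree j (Nm j) n (hNm0 j) ((hNm0 j).trans ((hNmmono hjk).trans hn)) j hj1 le_rfl
        rw [h1, h2]
      constructor
      · rw [cast_le_lcpLe_iff]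
        intro j hj1 hjk
        obtain ⟨s, hs⟩ := Option.isSome_iff_exists.mp (hfsome' j hj1)
        exact ⟨s, s, hs, (key j hj1 hjk).symm.trans hs, le_rfl⟩
      · rw [cast_le_lcpLe_iff]
        intro j hj1 hjk
        obtain ⟨s, hs⟩ := Option.isSome_iff_exists.mp (hfsome' j hj1)
        exact ⟨s, s, (key j hj1 hjk).symm.trans hs, hs, le_rfl⟩
    intro ε hε
    obtain ⟨k, hk⟩ := NNReal.exists_pow_lt_of_lt_one hε half_lt_one
    refine ⟨Nm k, fun n hn => ?_⟩
    obtain ⟨h1, h2⟩ := hlimlcp k n hn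
    have d1 : dqB l (x n) ≤ 2⁻¹^k :=
      (dqB_le _ _).trans (epow_le_half_pow.mpr h1)
    have d2 : dqB (x n) l ≤ 2⁻¹^k :=
      (dqB_le _ _).trans (epow_le_half_pow.mpr h2)
    exact lt_of_le_of_lt (max_le d1 d2) hk
  · -- Case A : lengths bounded along a subsequence; the sequence is eventually constant.
    push_neg at hB
    obtain ⟨L, hL⟩ := hB
    obtain ⟨N, hN⟩ := hcauchy (2⁻¹^(L+1)) (half_pow_pos _)
    obtain ⟨n0, hn0N, hn0len⟩ := hL N
    obtain ⟨M, hM⟩ : ∃ M : ℕ, (x n0).len = (M:ℕ∞) := by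
      have hne : (x n0).len ≠ ⊤ := fun h => by
        rw [h] at hn0len
        exact absurd hn0len (by simp)
      obtain ⟨M, hM⟩ := WithTop.ne_top_iff_exists.mp hne
      exact ⟨M, hM.symm⟩
    have hM1 : 1 ≤ M := by
      have := (x n0).one_le_len
      rw [hM] at this
      exact_mod_cast this
    have hML : M ≤ L := by
      rw [hM] at hn0len
      exact_mod_cast hn0len
    have hconst : ∀ n, N ≤ n → x n = x n0 := by
      intro n hn
      have hd1 : dqB (x n0) (x n) < 2⁻¹^(L+1) :=
        (le_max_left _ _).trans_lt (hN n0 n hn0N hn)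
      have hd2 : dqB (x n) (x n0) < 2⁻¹^(L+1) :=
        (le_max_right _ _).trans_lt (hN n0 n hn0N hn)
      -- first direction: lcpLe (x n0) (x n) = M
      have hlcp1 : (M:ℕ∞) ≤ lcpLe (x n0) (x n) := by
        by_contra hc
        have hlt : lcpLe (x n0) (x n) < (M:ℕ∞) := not_le.mp hc
        obtain ⟨j, hj⟩ : ∃ j : ℕ, lcpLe (x n0) (x n) = (j:ℕ∞) := by
          have hne : lcpLe (x n0) (x n) ≠ ⊤ := fun h => by
            rw [h] at hlt; exact absurd hlt (by simp)
          obtain ⟨j, hj⟩ := WithTop.ne_top_iff_exists.mp hne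
          exact ⟨j, hj.symm⟩
        have hjM : j < M := by rw [hj] at hlt; exact_mod_cast hlt
        have : 2⁻¹^(L+1) ≤ dqB (x n0) (x n) := by
          rw [dqB_eq, hM, epow_coe, hj, epow_coe]
          rw [le_tsub_iff_right (half_pow_le_iff.mpr hjM.le)]
          calc (2⁻¹:ℝ≥0)^(L+1) + 2⁻¹^M ≤ 2⁻¹^M + 2⁻¹^M :=
                add_le_add_left (half_pow_le_iff.mpr (by omega)) _
            _ = 2⁻¹^(M-1) := by
                have hM' : M - 1 + 1 = M := by omega
                conv_lhs => rw [← hM']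
                rw [two_halves]
            _ ≤ 2⁻¹^j := half_pow_le_iff.mpr (by omega)
        exact absurd hd1 (not_lt.mpr this)
      have hlenn_ge : (M:ℕ∞) ≤ (x n).len := hlcp1.trans (lcpLe_le_len_right _ _)
      -- second direction
      have hle2 : lcpLe (x n) (x n0) ≤ (M:ℕ∞) := (lcpLe_le_len_right _ _).trans hM.le
      obtain ⟨j, hj⟩ : ∃ j : ℕ, lcpLe (x n) (x n0) = (j:ℕ∞) := by
        have hne : lcpLe (x n) (x n0) ≠ ⊤ := fun h => by
          rw [h] at hle2; exact absurd hle2 (by simp)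
        obtain ⟨j, hj⟩ := WithTop.ne_top_iff_exists.mp hne
        exact ⟨j, hj.symm⟩
      have hjM : j ≤ M := by rw [hj] at hle2; exact_mod_cast hle2
      have hlen_le : (x n).len ≤ (j:ℕ∞) := by
        by_contra hc
        push_neg at hc
        have hjlen : (((j+1:ℕ)):ℕ∞) ≤ (x n).len := by
          have := Order.add_one_le_of_lt hc
          push_cast at this ⊢
          exact this
        have : 2⁻¹^(L+1) ≤ dqB (x n) (x n0) := by
          rw [dqB_eq, hj, epow_coe]
          have hlen1 : epow (x n).len ≤ 2⁻¹^(j+1) := epow_le_half_pow.mpr hjlen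
          calc (2⁻¹:ℝ≥0)^(L+1) ≤ 2⁻¹^(j+1) := half_pow_le_iff.mpr (by omega)
            _ = 2⁻¹^j - 2⁻¹^(j+1) := by rw [← two_halves j, add_tsub_cancel_right]
            _ ≤ 2⁻¹^j - epow (x n).len := tsub_le_tsub_left hlen1 _
        exact absurd hd2 (not_lt.mpr this)
      have hjM' : j = M := by
        have : (M:ℕ∞) ≤ (j:ℕ∞) := hlenn_ge.trans hlen_le
        have := (Nat.cast_le (α := ℕ∞)).mp this
        omega
      have hlenn : (x n).len = (M:ℕ∞) :=
        le_antisymm (hlen_le.trans (by exact_mod_cast hjM'.le)) hlenn_ge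
      have hlcp2 : (M:ℕ∞) ≤ lcpLe (x n) (x n0) := by rw [hj]; exact_mod_cast hjM'.ge
      -- conclude equality
      refine PWord.ext' (funext fun k => ?_)
      rcases Nat.eq_zero_or_pos k with rfl | hk1
      · rw [(x n).map_zero', (x n0).map_zero']
      rcases le_or_gt k M with hkM | hkM
      · obtain ⟨s, t, hs, ht, hst⟩ :=
          (cast_le_lcpLe_iff (x n0) (x n) M).mp hlcp1 k hk1 hkM
        obtain ⟨t', s', ht', hs', hts⟩ :=
          (cast_le_lcpLe_iff (x n) (x n0) M).mp hlcp2 k hk1 hkM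
        rw [ht] at ht'
        rw [hs] at hs'
        rw [Option.some_inj] at ht' hs'
        rw [← ht', ← hs'] at hts
        have : s = t := le_antisymm hst hts
        rw [ht, hs, this]
      · have h1 : (x n).toFun k = none := (x n).toFun_eq_none (by
          rw [hlenn]; exact_mod_cast hkM)
        have h2 : (x n0).toFun k = none := (x n0).toFun_eq_none (by
          rw [hM]; exact_mod_cast hkM)
        rw [h1, h2]
    refine ⟨x n0, fun ε hε => ⟨N, fun n hn => ?_⟩⟩
    rw [hconst n hn]
    simpa [dqB] using hε
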